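/- Let β ≥ 1 and define g(x,1) = ∫_ℝ e^{-|ξ|^{2β}} e^{i x ξ} dξ and its derivative ∂_x g(x,1) = ∫_ℝ (iξ) e^{-|ξ|^{2β}} e^{i x ξ} dξ. Then there exists a constant C > 0 depending only on β such that |∂_x g(x,1)| ≤ C (1 + x²)^{-1} for all x ∈ ℝ; in particular ∂_x g(·,1) ∈ L¹(ℝ). -/

import Mathlib

open MeasureTheory Real FourierTransform

/-- The spatial derivative of the 1D kernel at time `t = 1`:
`∂_x g(x,1) = ∫_ℝ (iξ) e^{-|ξ|^{2β}} e^{i x ξ} dξ`. -/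
noncomputable def kernelGDerivOne (β x : ℝ) : ℂ :=
  ∫ ξ : ℝ, (Complex.I * ξ) * (Real.exp (-|ξ| ^ (2 * β)) : ℂ)
      * Complex.exp (Complex.I * x * ξ)

noncomputable def rr (β ξ : ℝ) : ℝ := (ξ ^ 2) ^ β

lemma rr_nonneg (β ξ : ℝ) : 0 ≤ rr β ξ := Real.rpow_nonneg (sq_nonneg ξ) β

lemma hasDerivAt_rr (β : ℝ) (hβ : 1 ≤ β) (ξ : ℝ) :
    HasDerivAt (rr β) (2 * β * ξ * (ξ ^ 2) ^ (β - 1)) ξ := by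
  have := (hasDerivAt_pow 2 ξ).rpow_const (p := β) (Or.inr hβ)
  convert this using 1
  · rfl
  push_cast
  ring

lemma rr_mul_sq (β : ℝ) (hβ : 1 ≤ β) (ξ : ℝ) :
    ξ ^ 2 * (ξ ^ 2) ^ (β - 1) = rr β ξ := by
  rcases eq_or_ne ξ 0 with h | h
  · subst h
    simp [rr, Real.zero_rpow (by linarith : β ≠ 0)]
  · have h2 : (0:ℝ) < ξ ^ 2 := by positivity
    have e : (ξ ^ 2) ^ β = (ξ ^ 2) ^ (1:ℝ) * (ξ ^ 2) ^ (β - 1) := by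
      rw [← Real.rpow_add h2]; ring_nf
    rw [rr, e, Real.rpow_one]

lemma rr_ge (β : ℝ) (hβ : 1 ≤ β) (ξ : ℝ) : ξ ^ 2 - 1 ≤ rr β ξ := by
  rcases le_or_gt (ξ ^ 2) 1 with h | h
  · have := rr_nonneg β ξ; linarith
  · have : (ξ ^ 2) ^ (1:ℝ) ≤ (ξ ^ 2) ^ β :=
      Real.rpow_le_rpow_of_exponent_le h.le hβ
    rw [Real.rpow_one] at this
    have : ξ ^ 2 ≤ rr β ξ := this
    linarith

noncomputable def hh (β ξ : ℝ) : ℂ := Complex.I * ((ξ * Real.exp (-(rr β ξ)) : ℝ) : ℂ)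
noncomputable def hh1 (β ξ : ℝ) : ℂ :=
  Complex.I * ((Real.exp (-(rr β ξ)) * (1 - 2 * β * rr β ξ) : ℝ) : ℂ)
noncomputable def hh2 (β ξ : ℝ) : ℂ :=
  Complex.I * ((-(2 * β * ξ * (ξ ^ 2) ^ (β - 1)) * Real.exp (-(rr β ξ))
      * (1 + 2 * β - 2 * β * rr β ξ) : ℝ) : ℂ)

lemma hasDerivAt_hh (β : ℝ) (hβ : 1 ≤ β) (ξ : ℝ) :
    HasDerivAt (hh β) (hh1 β ξ) ξ := by
  have hr := hasDerivAt_rr β hβ ξ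
  have hexp : HasDerivAt (fun ξ => Real.exp (-(rr β ξ)))
      (-(2 * β * ξ * (ξ ^ 2) ^ (β - 1)) * Real.exp (-(rr β ξ))) ξ := by
    simpa [mul_comm] using (hr.neg).exp
  have hmul := (hasDerivAt_id ξ).mul hexp
  have h2 : HasDerivAt (fun ξ : ℝ => ξ * Real.exp (-(rr β ξ)))
      (Real.exp (-(rr β ξ)) * (1 - 2 * β * rr β ξ)) ξ := by
    refine hmul.congr_deriv ?_
    rw [id_eq, ← rr_mul_sq β hβ ξ]
    ring
  exact (h2.ofReal_comp).const_mul Complex.I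

lemma hasDerivAt_hh1 (β : ℝ) (hβ : 1 ≤ β) (ξ : ℝ) :
    HasDerivAt (hh1 β) (hh2 β ξ) ξ := by
  have hr := hasDerivAt_rr β hβ ξ
  have hexp : HasDerivAt (fun ξ => Real.exp (-(rr β ξ)))
      (-(2 * β * ξ * (ξ ^ 2) ^ (β - 1)) * Real.exp (-(rr β ξ))) ξ := by
    simpa [mul_comm] using (hr.neg).exp
  have hlin : HasDerivAt (fun ξ : ℝ => 1 - 2 * β * rr β ξ)
      (-(2 * β * (2 * β * ξ * (ξ ^ 2) ^ (β - 1)))) ξ := by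
    simpa using ((hr.const_mul (2 * β)).const_sub 1)
  have h2 := hexp.mul hlin
  have h3 : HasDerivAt (fun ξ : ℝ => Real.exp (-(rr β ξ)) * (1 - 2 * β * rr β ξ))
      (-(2 * β * ξ * (ξ ^ 2) ^ (β - 1)) * Real.exp (-(rr β ξ))
        * (1 + 2 * β - 2 * β * rr β ξ)) ξ := by
    refine h2.congr_deriv ?_
    ring
  exact (h3.ofReal_comp).const_mul Complex.I

lemma norm_hh_eq (β ξ : ℝ) : ‖hh β ξ‖ = |ξ| * Real.exp (-(rr β ξ)) := by
  rw [hh, norm_mul, Complex.norm_I, one_mul, Complex.norm_real, Real.norm_eq_abs,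
    abs_mul, Real.abs_exp]

lemma norm_hh1_eq (β ξ : ℝ) :
    ‖hh1 β ξ‖ = Real.exp (-(rr β ξ)) * |1 - 2 * β * rr β ξ| := by
  rw [hh1, norm_mul, Complex.norm_I, one_mul, Complex.norm_real, Real.norm_eq_abs,
    abs_mul, Real.abs_exp]

lemma norm_hh2_eq (β ξ : ℝ) (hβ : 1 ≤ β) :
    ‖hh2 β ξ‖ = 2 * β * |ξ| * (ξ ^ 2) ^ (β - 1) * Real.exp (-(rr β ξ))
      * |1 + 2 * β - 2 * β * rr β ξ| := by
  have h0 : (0:ℝ) ≤ (ξ ^ 2) ^ (β - 1) := Real.rpow_nonneg (sq_nonneg ξ) _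
  have hb : (0:ℝ) < 2 * β := by linarith
  rw [hh2, norm_mul, Complex.norm_I, one_mul, Complex.norm_real, Real.norm_eq_abs,
    abs_mul, abs_mul, Real.abs_exp, abs_neg, abs_mul,
    abs_mul (2 * β) ξ, abs_of_pos hb, abs_of_nonneg h0]

lemma exp_neg_rr_le (β : ℝ) (hβ : 1 ≤ β) (ξ : ℝ) :
    Real.exp (-(rr β ξ)) ≤ Real.exp (1 - ξ ^ 2) :=
  Real.exp_le_exp.2 (by have := rr_ge β hβ ξ; linarith)

lemma exp_neg_half_rr_le (β : ℝ) (hβ : 1 ≤ β) (ξ : ℝ) :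
    Real.exp (-(rr β ξ) / 2) ≤ Real.exp ((1 - ξ ^ 2) / 2) :=
  Real.exp_le_exp.2 (by have := rr_ge β hβ ξ; linarith)

lemma abs_le_exp_half_sq (ξ : ℝ) : |ξ| ≤ Real.exp (ξ ^ 2 / 2) := by
  have h1 := Real.add_one_le_exp (ξ ^ 2 / 2)
  nlinarith [sq_nonneg (|ξ| - 1), sq_abs ξ, abs_nonneg ξ]

lemma one_add_le_exp_half (t : ℝ) (ht : 0 ≤ t) : 1 + t ≤ 3 * Real.exp (t / 2) := by
  have h1 := Real.add_one_le_exp (t / 2)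
  have h2 := Real.one_le_exp (by linarith : 0 ≤ t / 2)
  linarith

lemma one_add_le_exp_quarter (t : ℝ) (ht : 0 ≤ t) : 1 + t ≤ 5 * Real.exp (t / 4) := by
  have h1 := Real.add_one_le_exp (t / 4)
  have h2 := Real.one_le_exp (by linarith : 0 ≤ t / 4)
  linarith

lemma norm_hh_le (β : ℝ) (hβ : 1 ≤ β) (ξ : ℝ) :
    ‖hh β ξ‖ ≤ Real.exp 1 * Real.exp (-(ξ ^ 2 / 2)) := by
  rw [norm_hh_eq]
  calc |ξ| * Real.exp (-(rr β ξ))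
      ≤ Real.exp (ξ ^ 2 / 2) * Real.exp (1 - ξ ^ 2) := by
        exact mul_le_mul (abs_le_exp_half_sq ξ) (exp_neg_rr_le β hβ ξ)
          (Real.exp_pos _).le (Real.exp_pos _).le
    _ = Real.exp 1 * Real.exp (-(ξ ^ 2 / 2)) := by
        rw [← Real.exp_add, ← Real.exp_add]; ring_nf

lemma exp_split (a b : ℝ) : Real.exp (a + b) = Real.exp a * Real.exp b := Real.exp_add a b

lemma norm_hh1_le (β : ℝ) (hβ : 1 ≤ β) (ξ : ℝ) :
    ‖hh1 β ξ‖ ≤ 3 * (1 + 2 * β) * Real.exp (1/2) * Real.exp (-(ξ ^ 2 / 2)) := by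
  rw [norm_hh1_eq]
  have hr := rr_nonneg β ξ
  have h1 : |1 - 2 * β * rr β ξ| ≤ (1 + 2 * β) * (1 + rr β ξ) := by
    rw [abs_le]; constructor <;> nlinarith
  have h2 : (1 + 2 * β) * (1 + rr β ξ) ≤ (1 + 2 * β) * (3 * Real.exp (rr β ξ / 2)) :=
    mul_le_mul_of_nonneg_left (one_add_le_exp_half _ hr) (by linarith)
  have e1 : Real.exp (-(rr β ξ)) * Real.exp (rr β ξ / 2) = Real.exp (-(rr β ξ) / 2) := by
    rw [← Real.exp_add]; congr 1; ring
  calc Real.exp (-(rr β ξ)) * |1 - 2 * β * rr β ξ|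
      ≤ Real.exp (-(rr β ξ)) * ((1 + 2 * β) * (3 * Real.exp (rr β ξ / 2))) :=
        mul_le_mul_of_nonneg_left (h1.trans h2) (Real.exp_pos _).le
    _ = 3 * (1 + 2 * β) * Real.exp (-(rr β ξ) / 2) := by rw [← e1]; ring
    _ ≤ 3 * (1 + 2 * β) * Real.exp ((1 - ξ ^ 2) / 2) :=
        mul_le_mul_of_nonneg_left (exp_neg_half_rr_le β hβ ξ) (by linarith)
    _ = 3 * (1 + 2 * β) * Real.exp (1/2) * Real.exp (-(ξ ^ 2 / 2)) := by
        rw [mul_assoc (3 * (1 + 2 * β)), ← Real.exp_add]; congr 2; ring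

lemma abs_mul_rpow_le (β : ℝ) (hβ : 1 ≤ β) (ξ : ℝ) :
    |ξ| * (ξ ^ 2) ^ (β - 1) ≤ 1 + rr β ξ := by
  have hr := rr_nonneg β ξ
  rcases le_or_gt (|ξ|) 1 with h | h
  · have hsq : ξ ^ 2 ≤ 1 := by nlinarith [sq_abs ξ, abs_nonneg ξ]
    have h0 : (ξ ^ 2) ^ (β - 1) ≤ 1 :=
      Real.rpow_le_one (sq_nonneg ξ) hsq (by linarith)
    have := mul_le_one₀ h (Real.rpow_nonneg (sq_nonneg ξ) _) h0
    linarith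
  · have hle : |ξ| ≤ ξ ^ 2 := by nlinarith [sq_abs ξ]
    have h0 : |ξ| * (ξ ^ 2) ^ (β - 1) ≤ ξ ^ 2 * (ξ ^ 2) ^ (β - 1) :=
      mul_le_mul_of_nonneg_right hle (Real.rpow_nonneg (sq_nonneg ξ) _)
    rw [rr_mul_sq β hβ ξ] at h0
    linarith

lemma norm_hh2_le (β : ℝ) (hβ : 1 ≤ β) (ξ : ℝ) :
    ‖hh2 β ξ‖ ≤ 50 * β * (1 + 2 * β) * Real.exp (1/2) * Real.exp (-(ξ ^ 2 / 2)) := by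
  rw [norm_hh2_eq β ξ hβ]
  have hr := rr_nonneg β ξ
  have hq : (0:ℝ) ≤ Real.exp (rr β ξ / 4) := (Real.exp_pos _).le
  have h1 : |1 + 2 * β - 2 * β * rr β ξ| ≤ (1 + 2 * β) * (1 + rr β ξ) := by
    rw [abs_le]; constructor <;> nlinarith
  have h2 : |ξ| * (ξ ^ 2) ^ (β - 1) ≤ 1 + rr β ξ := abs_mul_rpow_le β hβ ξ
  have h3 : 1 + rr β ξ ≤ 5 * Real.exp (rr β ξ / 4) := one_add_le_exp_quarter _ hr
  have hnn : (0:ℝ) ≤ |ξ| * (ξ ^ 2) ^ (β - 1) :=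
    mul_nonneg (abs_nonneg ξ) (Real.rpow_nonneg (sq_nonneg ξ) _)
  have e1 : Real.exp (rr β ξ / 4) * Real.exp (rr β ξ / 4) * Real.exp (-(rr β ξ))
      = Real.exp (-(rr β ξ) / 2) := by
    rw [← Real.exp_add, ← Real.exp_add]; congr 1; ring
  have key : |ξ| * (ξ ^ 2) ^ (β - 1) * Real.exp (-(rr β ξ))
      * |1 + 2 * β - 2 * β * rr β ξ|
      ≤ (5 * Real.exp (rr β ξ / 4)) * Real.exp (-(rr β ξ))
        * ((1 + 2 * β) * (5 * Real.exp (rr β ξ / 4))) := by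
    have hA : |ξ| * (ξ ^ 2) ^ (β - 1) ≤ 5 * Real.exp (rr β ξ / 4) := h2.trans h3
    have hB : |1 + 2 * β - 2 * β * rr β ξ| ≤ (1 + 2 * β) * (5 * Real.exp (rr β ξ / 4)) :=
      h1.trans (mul_le_mul_of_nonneg_left h3 (by linarith))
    apply mul_le_mul
    · exact mul_le_mul_of_nonneg_right hA (Real.exp_pos _).le
    · exact hB
    · exact abs_nonneg _
    · positivity
  calc 2 * β * |ξ| * (ξ ^ 2) ^ (β - 1) * Real.exp (-(rr β ξ))
        * |1 + 2 * β - 2 * β * rr β ξ|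
      = 2 * β * (|ξ| * (ξ ^ 2) ^ (β - 1) * Real.exp (-(rr β ξ))
          * |1 + 2 * β - 2 * β * rr β ξ|) := by ring
    _ ≤ 2 * β * ((5 * Real.exp (rr β ξ / 4)) * Real.exp (-(rr β ξ))
          * ((1 + 2 * β) * (5 * Real.exp (rr β ξ / 4)))) :=
        mul_le_mul_of_nonneg_left key (by linarith)
    _ = 50 * β * (1 + 2 * β) * Real.exp (-(rr β ξ) / 2) := by
        rw [← e1]; ring
    _ ≤ 50 * β * (1 + 2 * β) * Real.exp ((1 - ξ ^ 2) / 2) :=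
        mul_le_mul_of_nonneg_left (exp_neg_half_rr_le β hβ ξ) (by nlinarith)
    _ = 50 * β * (1 + 2 * β) * Real.exp (1/2) * Real.exp (-(ξ ^ 2 / 2)) := by
        rw [mul_assoc (50 * β * (1 + 2 * β)), ← Real.exp_add]; congr 2; ring

lemma integrable_gauss : Integrable (fun ξ : ℝ => Real.exp (-(ξ ^ 2 / 2))) := by
  have h := integrable_exp_neg_mul_sq (by norm_num : (0:ℝ) < 1/2)
  have e : (fun ξ : ℝ => Real.exp (-(ξ ^ 2 / 2)))
      = fun ξ : ℝ => Real.exp (-(1/2) * ξ ^ 2) := by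
    funext ξ; congr 1; ring
  rw [e]; exact h

lemma differentiable_hh (β : ℝ) (hβ : 1 ≤ β) : Differentiable ℝ (hh β) :=
  fun ξ => (hasDerivAt_hh β hβ ξ).differentiableAt

lemma differentiable_hh1 (β : ℝ) (hβ : 1 ≤ β) : Differentiable ℝ (hh1 β) :=
  fun ξ => (hasDerivAt_hh1 β hβ ξ).differentiableAt

lemma deriv_hh (β : ℝ) (hβ : 1 ≤ β) : deriv (hh β) = hh1 β :=
  funext fun ξ => (hasDerivAt_hh β hβ ξ).deriv

lemma deriv_hh1 (β : ℝ) (hβ : 1 ≤ β) : deriv (hh1 β) = hh2 β :=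
  funext fun ξ => (hasDerivAt_hh1 β hβ ξ).deriv

lemma continuous_rpow_sq (p : ℝ) (hp : 0 ≤ p) :
    Continuous (fun ξ : ℝ => (ξ ^ 2) ^ p) := by
  rw [continuous_iff_continuousAt]
  intro ξ
  have h : ContinuousAt (fun ξ : ℝ => ξ ^ 2) ξ := (continuous_pow 2).continuousAt
  exact ContinuousAt.comp (x := ξ) (g := fun y : ℝ => y ^ p) (f := fun y : ℝ => y ^ 2)
    (Real.continuousAt_rpow_const _ p (Or.inr hp)) h

lemma continuous_rr (β : ℝ) (hβ : 1 ≤ β) : Continuous (rr β) :=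
  continuous_rpow_sq β (by linarith)

lemma continuous_hh2 (β : ℝ) (hβ : 1 ≤ β) : Continuous (hh2 β) := by
  unfold hh2
  have h1 : Continuous (fun ξ : ℝ => (ξ ^ 2) ^ (β - 1)) :=
    continuous_rpow_sq (β - 1) (by linarith)
  have h2 := continuous_rr β hβ
  continuity

lemma integrable_hh (β : ℝ) (hβ : 1 ≤ β) : Integrable (hh β) := by
  refine (integrable_gauss.const_mul (Real.exp 1)).mono'
    (differentiable_hh β hβ).continuous.aestronglyMeasurable
    (ae_of_all _ fun ξ => ?_)
  simpa using norm_hh_le β hβ ξ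

lemma integrable_hh1 (β : ℝ) (hβ : 1 ≤ β) : Integrable (hh1 β) := by
  refine (integrable_gauss.const_mul (3 * (1 + 2 * β) * Real.exp (1/2))).mono'
    (differentiable_hh1 β hβ).continuous.aestronglyMeasurable
    (ae_of_all _ fun ξ => ?_)
  simpa [mul_assoc] using norm_hh1_le β hβ ξ

lemma integrable_hh2 (β : ℝ) (hβ : 1 ≤ β) : Integrable (hh2 β) := by
  refine (integrable_gauss.const_mul (50 * β * (1 + 2 * β) * Real.exp (1/2))).mono'
    (continuous_hh2 β hβ).aestronglyMeasurable
    (ae_of_all _ fun ξ => ?_)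
  simpa [mul_assoc] using norm_hh2_le β hβ ξ

lemma abs_rpow_eq (β ξ : ℝ) : |ξ| ^ (2 * β) = rr β ξ := by
  rw [rr, show (2 * β) = ((2:ℕ):ℝ) * β by norm_num, Real.rpow_mul (abs_nonneg ξ),
    Real.rpow_natCast, sq_abs]

lemma fourier_hh1_eq (β : ℝ) (hβ : 1 ≤ β) :
    𝓕 (hh1 β) = fun w : ℝ => (2 * π * Complex.I * w) • 𝓕 (hh β) w := by
  rw [← deriv_hh β hβ]
  exact Real.fourier_deriv (integrable_hh β hβ) (differentiable_hh β hβ)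
    (by rw [deriv_hh β hβ]; exact integrable_hh1 β hβ)

lemma fourier_hh2_eq (β : ℝ) (hβ : 1 ≤ β) :
    𝓕 (hh2 β) = fun w : ℝ => (2 * π * Complex.I * w) • 𝓕 (hh1 β) w := by
  rw [← deriv_hh1 β hβ]
  exact Real.fourier_deriv (integrable_hh1 β hβ) (differentiable_hh1 β hβ)
    (by rw [deriv_hh1 β hβ]; exact integrable_hh2 β hβ)

lemma norm_two_pi_I (w : ℝ) : ‖(2 * (π:ℂ) * Complex.I * (w:ℂ))‖ = 2 * π * |w| := by
  simp [abs_of_nonneg Real.pi_pos.le]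

lemma norm_F_le (f : ℝ → ℂ) (w : ℝ) : ‖𝓕 f w‖ ≤ ∫ ξ : ℝ, ‖f ξ‖ :=
  VectorFourier.norm_fourierIntegral_le_integral_norm _ _ _ _ _

lemma continuous_F (f : ℝ → ℂ) (hf : Integrable f) : Continuous (𝓕 f) :=
  VectorFourier.fourierIntegral_continuous Real.continuous_fourierChar
    (by exact continuous_inner) hf

lemma fourier_bound2 (β : ℝ) (hβ : 1 ≤ β) (w : ℝ) :
    ‖𝓕 (hh β) w‖ * (2 * π * |w|) ^ 2 ≤ ∫ ξ : ℝ, ‖hh2 β ξ‖ := by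
  have h := norm_F_le (hh2 β) w
  rw [fourier_hh2_eq β hβ] at h
  simp only [fourier_hh1_eq β hβ] at h
  rw [norm_smul, norm_smul, norm_two_pi_I] at h
  calc ‖𝓕 (hh β) w‖ * (2 * π * |w|) ^ 2
      = 2 * π * |w| * (2 * π * |w| * ‖𝓕 (hh β) w‖) := by ring
    _ ≤ ∫ ξ : ℝ, ‖hh2 β ξ‖ := h

lemma kernel_eq_fourier (β : ℝ) (x : ℝ) :
    kernelGDerivOne β x = 𝓕 (hh β) (-(x / (2 * π))) := by
  rw [kernelGDerivOne, Real.fourier_eq']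
  refine integral_congr_ae (Filter.Eventually.of_forall fun ξ => ?_)
  simp only [RCLike.inner_apply, conj_trivial, smul_eq_mul, hh, abs_rpow_eq]
  have hπ : (π:ℝ) ≠ 0 := Real.pi_ne_zero
  have harg : ((-2 * π * (-(x / (2 * π)) * ξ) : ℝ) : ℂ) * Complex.I
      = Complex.I * (x:ℂ) * (ξ:ℂ) := by
    have : (-2) * π * (-(x / (2 * π)) * ξ) = x * ξ := by field_simp
    rw [this]
    push_cast
    ring
  rw [harg]
  push_cast
  ring

/-- For `β ≥ 1` there is `C > 0` (depending only on `β`) with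
`|∂_x g(x,1)| ≤ C (1 + x²)⁻¹` for all `x`; in particular `∂_x g(·,1) ∈ L¹(ℝ)`. -/
theorem kernelGDerivOne_decay (β : ℝ) (hβ : 1 ≤ β) :
    ∃ C > 0, (∀ x : ℝ, ‖kernelGDerivOne β x‖ ≤ C / (1 + x ^ 2)) ∧
      Integrable (fun x => kernelGDerivOne β x) := by
  set A := ∫ ξ : ℝ, ‖hh β ξ‖ with hA
  set B := ∫ ξ : ℝ, ‖hh2 β ξ‖ with hB
  have hA0 : 0 ≤ A := integral_nonneg fun ξ => norm_nonneg _
  have hB0 : 0 ≤ B := integral_nonneg fun ξ => norm_nonneg _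
  set C := 2 * A + 2 * B + 1 with hC
  have hbound : ∀ x : ℝ, ‖kernelGDerivOne β x‖ ≤ C / (1 + x ^ 2) := by
    intro x
    have hx0 : (0:ℝ) < 1 + x ^ 2 := by positivity
    rw [kernel_eq_fourier, le_div_iff₀ hx0]
    set w := -(x / (2 * π)) with hw
    have hwabs : 2 * π * |w| = |x| := by
      rw [hw, abs_neg, abs_div, abs_of_pos (by positivity : (0:ℝ) < 2 * π)]
      field_simp
    have hKA : ‖𝓕 (hh β) w‖ ≤ A := norm_F_le _ _
    have hKB : ‖𝓕 (hh β) w‖ * x ^ 2 ≤ B := by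
      have h := fourier_bound2 β hβ w
      rwa [hwabs, sq_abs] at h
    have hN : (0:ℝ) ≤ ‖𝓕 (hh β) w‖ := norm_nonneg _
    rcases le_or_gt (x ^ 2) 1 with h | h
    · nlinarith
    · nlinarith
  refine ⟨C, by linarith, fun x => ?_, ?_⟩
  · exact hbound x
  · have hfun : (fun x => kernelGDerivOne β x)
        = fun x : ℝ => 𝓕 (hh β) (-(x / (2 * π))) := funext (kernel_eq_fourier β)
    have hcont : Continuous fun x : ℝ => 𝓕 (hh β) (-(x / (2 * π))) :=
      (continuous_F _ (integrable_hh β hβ)).comp (by fun_prop)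
    refine Integrable.mono' ((integrable_inv_one_add_sq).const_mul C)
      (hfun ▸ hcont.aestronglyMeasurable) (ae_of_all _ fun x => ?_)
    rw [mul_comm C, ← div_eq_inv_mul]
    exact hbound x
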